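/- Let G be a k-edge-connected cograph and let X be the set of vertices of degree exactly k in G. Any set of edges E_ca (from the complement of G) whose addition makes G (k+1)-edge-connected satisfies |E_ca| ≥ ρ(Ḡ[X]), where ρ denotes the (generalized) minimum edge cover number of the complement graph induced on X, with isolated vertices counting 1 each. -/
import Mathlib


open SimpleGraph

variable {V : Type*}

/-- A graph is a cograph iff it has no induced path on four vertices. -/
def IsP4Free (G : SimpleGraph V) : Prop :=
  ∀ a b c d : V, a ≠ b → a ≠ c → a ≠ d → b ≠ c → b ≠ d → c ≠ d →
    ¬(G.Adj a b ∧ G.Adj b c ∧ G.Adj c d ∧ ¬G.Adj a c ∧ ¬G.Adj a d ∧ ¬G.Adj b d)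

/-- `G` is `k`-edge-connected: it is connected and at least `k` edges must be removed to
disconnect it. -/
def IsKEdgeConnected (G : SimpleGraph V) (k : ℕ) : Prop :=
  G.Connected ∧
  ∀ F : Finset (Sym2 V), ↑F ⊆ G.edgeSet → ¬(G.deleteEdges ↑F).Connected → k ≤ F.card

/-- A witness of size `n` for the generalized edge cover of `H[s]`: a set `C` of edges of
`H` inside `s` together with a set `T` of vertices of `s` (the trivial components, each
counting `1`) such that every vertex of `s` lies in `T` or on an edge of `C`, with
`n = |C| + |T|`.  The minimum such `n` is `ρ(H[s]) = Σ_i ρ(H_i)`, where `ρ(H_i)` is the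
minimum edge cover number of a nontrivial component and `1` for a trivial component. -/
def GenEdgeCoverWitness (H : SimpleGraph V) (s : Set V) (n : ℕ) : Prop :=
  ∃ (C : Finset (Sym2 V)) (T : Finset V),
    ↑C ⊆ H.edgeSet ∧ (∀ e ∈ C, ∀ x ∈ e, x ∈ s) ∧ ↑T ⊆ s ∧
    (∀ x ∈ s, x ∈ T ∨ ∃ e ∈ C, x ∈ e) ∧ n = C.card + T.card

/-- The generalized minimum edge cover number `ρ(H[s])`. -/
noncomputable def genEdgeCoverNumber (H : SimpleGraph V) (s : Set V) : ℕ :=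
  sInf {n : ℕ | GenEdgeCoverWitness H s n}

/-- Lower bound for `(k+1)`-edge connectivity augmentation of a `k`-edge-connected cograph
`G` (on at least two vertices): if `H ⊇ G` is `(k+1)`-edge-connected, then the number of
added edges is at least `ρ(Ḡ[X])`, where `X` is the set of vertices of degree exactly `k`
in `G`. -/
theorem stmt_18 [Fintype V] (G : SimpleGraph V) [DecidableRel G.Adj]
    (hP4 : IsP4Free G) (hn : 2 ≤ Fintype.card V) (k : ℕ)
    (hkG : IsKEdgeConnected G k)
    (H : SimpleGraph V) (hGH : G ≤ H) (hk1 : IsKEdgeConnected H (k + 1)) :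
    genEdgeCoverNumber Gᶜ {v : V | G.degree v = k} ≤ (H.edgeSet \ G.edgeSet).ncard := by
  classical
  set X : Set V := {v : V | G.degree v = k} with hX
  have hfin : (H.edgeSet \ G.edgeSet).Finite := Set.toFinite _
  set D : Finset (Sym2 V) := hfin.toFinset with hD
  -- Every vertex of degree `k` in `G` is incident to an added edge.
  have hinc : ∀ v ∈ X, ∃ e ∈ D, v ∈ e := by
    intro v hv
    by_contra hcon
    push_neg at hcon
    have hnb : ∀ u, H.Adj v u → G.Adj v u := by
      intro u hu
      by_contra hgu
      have he : s(v, u) ∈ D := by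
        rw [hD, Set.Finite.mem_toFinset]
        exact ⟨(H.mem_edgeSet).mpr hu, fun h => hgu ((G.mem_edgeSet).mp h)⟩
      exact (hcon _ he) (Sym2.mem_mk_left _ _)
    -- Delete all edges at `v` in `H`: these are exactly the `G`-edges at `v`.
    set F : Finset (Sym2 V) := (G.neighborFinset v).image (fun u => s(v, u)) with hF
    have hFcard : F.card = k := by
      rw [hF, Finset.card_image_of_injOn (fun a _ b _ h => Sym2.congr_right.mp h)]
      exact hv
    have hFsub : ↑F ⊆ H.edgeSet := by
      intro e he
      simp only [hF, Finset.coe_image, Set.mem_image, Finset.mem_coe,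
        SimpleGraph.mem_neighborFinset] at he
      obtain ⟨u, hu, rfl⟩ := he
      exact (H.mem_edgeSet).mpr (hGH hu)
    have hnc : ¬(H.deleteEdges ↑F).Connected := by
      intro hc
      obtain ⟨u, huv⟩ := Fintype.exists_ne_of_one_lt_card hn v
      obtain ⟨p⟩ := hc.preconnected v u
      cases p with
      | nil => exact huv rfl
      | cons h q =>
        rw [SimpleGraph.deleteEdges_adj] at h
        obtain ⟨h1, h2⟩ := h
        apply h2
        simp only [hF, Finset.coe_image, Set.mem_image, Finset.mem_coe,
          SimpleGraph.mem_neighborFinset]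
        exact ⟨_, hnb _ h1, rfl⟩
    have := hk1.2 F hFsub hnc
    omega
  -- Key property of added edges: they are edges of the complement of `G`.
  have hDcompl : ∀ e ∈ D, e ∈ Gᶜ.edgeSet := by
    intro e he
    rw [hD, Set.Finite.mem_toFinset] at he
    obtain ⟨heH, heG⟩ := he
    induction e using Sym2.ind with
    | _ a b =>
      rw [SimpleGraph.mem_edgeSet] at heH heG ⊢
      rw [SimpleGraph.compl_adj]
      exact ⟨heH.ne, heG⟩
  -- The witness
  set C : Finset (Sym2 V) := D.filter (fun e => ∀ x ∈ e, x ∈ X) with hC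
  set T : Finset V := Finset.univ.filter (fun v => v ∈ X ∧ ¬ ∃ e ∈ C, v ∈ e) with hT
  have hwit : GenEdgeCoverWitness Gᶜ X (C.card + T.card) := by
    refine ⟨C, T, ?_, ?_, ?_, ?_, rfl⟩
    · intro e he
      exact hDcompl e (Finset.filter_subset _ _ (by exact_mod_cast he))
    · intro e he x hx
      rw [hC, Finset.mem_filter] at he
      exact he.2 x hx
    · intro v hv
      have hv' : v ∈ T := by exact_mod_cast hv
      rw [hT, Finset.mem_filter] at hv'
      exact hv'.2.1
    · intro x hx
      by_cases h' : ∃ e ∈ C, x ∈ e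
      · exact Or.inr h'
      · exact Or.inl (Finset.mem_filter.mpr ⟨Finset.mem_univ _, hx, h'⟩)
  have h1 : genEdgeCoverNumber Gᶜ X ≤ C.card + T.card := Nat.sInf_le hwit
  -- Count: C ⊆ D and T injects into D \ C
  have hCD : C ⊆ D := Finset.filter_subset _ _
  have hneV : Nonempty V := Fintype.card_pos_iff.mp (by omega)
  have hneS : Nonempty (Sym2 V) := ⟨s(hneV.some, hneV.some)⟩
  have hch : ∀ t : V, ∃ e : Sym2 V, t ∈ T → (e ∈ D ∧ t ∈ e ∧ e ∉ C) := by
    intro t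
    by_cases ht : t ∈ T
    · obtain ⟨ht1, ht2⟩ := (Finset.mem_filter.mp ht).2
      obtain ⟨e, heD, hte⟩ := hinc t ht1
      exact ⟨e, fun _ => ⟨heD, hte, fun hC' => ht2 ⟨e, hC', hte⟩⟩⟩
    · exact ⟨hneS.some, fun h => absurd h ht⟩
  choose f hf using hch
  have hTcard : T.card ≤ (D \ C).card := by
    apply Finset.card_le_card_of_injOn f
    · intro t ht
      obtain ⟨h1', h2', h3'⟩ := hf t ht
      exact Finset.mem_sdiff.mpr ⟨h1', h3'⟩
    · intro a ha b hb hab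
      obtain ⟨ha1, ha2, ha3⟩ := hf a ha
      obtain ⟨hb1, hb2, hb3⟩ := hf b hb
      by_contra habne
      have haX : a ∈ X := (Finset.mem_filter.mp ha).2.1
      have hbX : b ∈ X := (Finset.mem_filter.mp hb).2.1
      apply ha3
      rw [hC, Finset.mem_filter]
      refine ⟨ha1, ?_⟩
      have hfab : f a = s(a, b) :=
        (Sym2.mem_and_mem_iff habne).mp ⟨ha2, hab ▸ hb2⟩
      intro x hx
      rw [hfab, Sym2.mem_iff] at hx
      rcases hx with rfl | rfl
      · exact haX
      · exact hbX
  have h2 : C.card + T.card ≤ D.card := by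
    have := Finset.card_sdiff_add_card_eq_card hCD
    omega
  have h3 : D.card = (H.edgeSet \ G.edgeSet).ncard := (Set.ncard_eq_toFinset_card _ hfin).symm
  omega
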